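/- Fix a constant 0 < δ < 1. There exist N > 0 and 0 < α < 1, depending only on δ, such that for all integers k > N the following holds: let μ ≥ k+2 and let λ satisfy λ·f_k(λ) = μ·f_{k+1}(λ) with (1−δ)μ < λ ≤ μ and μ−λ small enough; if Y_1,…,Y_s are i.i.d. truncated Poisson variables with parameter λ conditioned to be ≥ k+1 (so E[Y_i] = μ), and s → ∞, then P(|Σ_{i=1}^s Y_i − μs| ≥ δμs) ≤ α^{μs}. -/

import Mathlib

set_option maxHeartbeats 1000000


open MeasureTheory ProbabilityTheory

/-- The upper tail of a Poisson(x) distribution: `f_k(x) = ∑_{i ≥ k} e^{-x} x^i / i!`. -/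
noncomputable def fpois (k : ℕ) (x : ℝ) : ℝ :=
  ∑' i : ℕ, if k ≤ i then Real.exp (-x) * x ^ i / (Nat.factorial i) else 0


lemma hasSum_pois (x : ℝ) :
    HasSum (fun n : ℕ => Real.exp (-x) * x ^ n / (Nat.factorial n)) 1 := by
  apply (hasSum_mul_left_iff (Real.exp_ne_zero x)).mp
  simp only [mul_one]
  have : (fun i : ℕ => Real.exp x * (Real.exp (-x) * x ^ i / (Nat.factorial i))) =
      fun i : ℕ => x ^ i / (Nat.factorial i) := by
    ext n
    rw [mul_div_assoc, Real.exp_neg, ← mul_assoc, ← div_eq_mul_inv,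
      div_self (Real.exp_ne_zero x), one_mul]
  rw [this, Real.exp_eq_exp_ℝ]
  exact NormedSpace.expSeries_div_hasSum_exp x

lemma summable_pois (x : ℝ) :
    Summable (fun n : ℕ => Real.exp (-x) * x ^ n / (Nat.factorial n)) :=
  (hasSum_pois x).summable

lemma pois_nonneg {x : ℝ} (hx : 0 ≤ x) (n : ℕ) :
    0 ≤ Real.exp (-x) * x ^ n / (Nat.factorial n) := by positivity

lemma summable_fpois_term {x : ℝ} (hx : 0 ≤ x) (m : ℕ) :
    Summable (fun i : ℕ => if m ≤ i then Real.exp (-x) * x ^ i / (Nat.factorial i) else 0) := by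
  refine Summable.of_nonneg_of_le (fun i => ?_) (fun i => ?_) (summable_pois x)
  · split
    · exact pois_nonneg hx i
    · exact le_refl 0
  · split
    · exact le_refl _
    · exact pois_nonneg hx i

lemma fpois_le_one {x : ℝ} (hx : 0 ≤ x) (m : ℕ) : fpois m x ≤ 1 := by
  rw [fpois, ← (hasSum_pois x).tsum_eq]
  refine Summable.tsum_le_tsum (fun i => ?_) (summable_fpois_term hx m) (summable_pois x)
  split
  · exact le_refl _
  · exact pois_nonneg hx i

lemma sum_le_fpois {x : ℝ} (hx : 0 ≤ x) (m : ℕ) (s : Finset ℕ) (hs : ∀ j ∈ s, m ≤ j) :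
    ∑ j ∈ s, Real.exp (-x) * x ^ j / (Nat.factorial j) ≤ fpois m x := by
  rw [fpois]
  have h := Summable.sum_le_tsum (f := fun i : ℕ =>
      if m ≤ i then Real.exp (-x) * x ^ i / (Nat.factorial i) else 0) s
    (fun i _ => by beta_reduce; split
                   · exact pois_nonneg hx i
                   · exact le_refl 0) (summable_fpois_term hx m)
  calc ∑ j ∈ s, Real.exp (-x) * x ^ j / (Nat.factorial j)
      = ∑ j ∈ s, (if m ≤ j then Real.exp (-x) * x ^ j / (Nat.factorial j) else 0) := by
        refine Finset.sum_congr rfl (fun j hj => ?_)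
        rw [if_pos (hs j hj)]
    _ ≤ _ := h

lemma fpois_pos {x : ℝ} (hx : 0 < x) (m : ℕ) : 0 < fpois m x := by
  have h := sum_le_fpois hx.le m {m} (by simp)
  simp only [Finset.sum_singleton] at h
  refine lt_of_lt_of_le ?_ h
  positivity

lemma factorial_le_stirling {n : ℕ} (hn : 1 ≤ n) :
    (Nat.factorial n : ℝ) ≤ Real.exp 1 * Real.sqrt n * ((n : ℝ) / Real.exp 1) ^ n := by
  have h := Stirling.stirlingSeq'_antitone (Nat.zero_le (n - 1))
  rw [Function.comp_apply, Function.comp_apply, Nat.succ_eq_add_one, Nat.succ_eq_add_one,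
    Nat.sub_add_cancel hn, zero_add, Stirling.stirlingSeq_one, Stirling.stirlingSeq] at h
  have hpos : 0 < Real.sqrt (2 * n : ℝ) * ((n : ℝ) / Real.exp 1) ^ n := by
    have h1 : (0:ℝ) < n := by exact_mod_cast hn
    positivity
  rw [div_le_iff₀ hpos] at h
  refine h.trans (le_of_eq ?_)
  have hs : Real.sqrt (2 * n : ℝ) = Real.sqrt 2 * Real.sqrt n := Real.sqrt_mul (by norm_num) _
  rw [hs]
  have h2 : Real.sqrt 2 ≠ 0 := by positivity
  field_simp

lemma fpois_lower {k : ℕ} {lam : ℝ} (hk : 100 ≤ k) (hlam : (k:ℝ) + 1 ≤ lam) :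
    Real.exp (-3) / 2 ≤ fpois (k + 1) lam := by
  have hk100 : (100:ℝ) ≤ k := by exact_mod_cast hk
  have hlam101 : (101 : ℝ) ≤ lam := by linarith
  have hlam0 : 0 < lam := by linarith
  set n₀ := ⌈lam⌉₊ with hn₀def
  set m := ⌈Real.sqrt lam⌉₊ with hmdef
  set n := n₀ + m with hndef
  have hsq : 0 ≤ Real.sqrt lam := Real.sqrt_nonneg lam
  have hsqsq : Real.sqrt lam * Real.sqrt lam = lam := Real.mul_self_sqrt hlam0.le
  have hsq10 : (10:ℝ) ≤ Real.sqrt lam := by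
    have h1 : Real.sqrt 100 ≤ Real.sqrt lam := Real.sqrt_le_sqrt (by linarith)
    rwa [show (100:ℝ) = 10^2 by norm_num, Real.sqrt_sq (by norm_num : (0:ℝ) ≤ 10)] at h1
  have hlamn₀ : lam ≤ (n₀:ℝ) := Nat.le_ceil lam
  have hn₀lam : (n₀:ℝ) < lam + 1 := Nat.ceil_lt_add_one hlam0.le
  have hmsq : Real.sqrt lam ≤ (m:ℝ) := Nat.le_ceil _
  have hmsq' : (m:ℝ) < Real.sqrt lam + 1 := Nat.ceil_lt_add_one hsq
  have hnr : (n:ℝ) = (n₀:ℝ) + (m:ℝ) := by rw [hndef]; push_cast; ring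
  have hnlam : lam ≤ (n:ℝ) := by rw [hnr]; nlinarith
  have hnub : (n:ℝ) ≤ lam + Real.sqrt lam + 2 := by rw [hnr]; linarith
  have h2lam : (n:ℝ) ≤ 2 * lam := by nlinarith
  have hn1 : 1 ≤ n := by
    by_contra h
    push_neg at h
    interval_cases n
    simp at hnlam
    linarith
  have hnpos : (0:ℝ) < n := by linarith
  have hk1n₀ : k + 1 ≤ n₀ := by
    have : ((k+1:ℕ):ℝ) ≤ (n₀:ℝ) := by push_cast; linarith
    exact_mod_cast this
  set p : ℕ → ℝ := fun j => Real.exp (-lam) * lam ^ j / (Nat.factorial j) with hpdef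
  have hmono : ∀ (j d : ℕ), lam ≤ (j:ℝ) → p (j + d) ≤ p j := by
    intro j d hj
    induction d with
    | zero => exact le_refl _
    | succ d ih =>
      refine le_trans ?_ ih
      show p (j + d + 1) ≤ p (j + d)
      have hq1 : lam ≤ ((j + d : ℕ):ℝ) + 1 := by push_cast; push_cast at hj; linarith [Nat.cast_nonneg (α := ℝ) d]
      have hfac : (0:ℝ) < (Nat.factorial (j+d) : ℝ) := by positivity
      have heq : p (j + d + 1) = p (j + d) * (lam / (((j+d):ℕ) + 1)) := by
        rw [hpdef]
        simp only [pow_succ, Nat.factorial_succ]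
        push_cast
        field_simp
      rw [heq]
      have hle : lam / (((j+d):ℕ) + 1) ≤ 1 := by
        rw [div_le_one (by positivity)]
        exact hq1
      have hp0 : 0 ≤ p (j + d) := by rw [hpdef]; positivity
      nlinarith
  have hterm : ∀ j ∈ Finset.Icc n₀ n, p n ≤ p j := by
    intro j hj
    obtain ⟨h1, h2⟩ := Finset.mem_Icc.mp hj
    have hjlam : lam ≤ (j:ℝ) := le_trans hlamn₀ (by exact_mod_cast h1)
    have : n = j + (n - j) := (Nat.add_sub_cancel' h2).symm
    rw [this]
    exact hmono j (n - j) hjlam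
  have hcard : (Finset.Icc n₀ n).card = m + 1 := by
    rw [Nat.card_Icc]; omega
  have hsum : ((m:ℝ) + 1) * p n ≤ ∑ j ∈ Finset.Icc n₀ n, p j := by
    have h := Finset.card_nsmul_le_sum (Finset.Icc n₀ n) p (p n) hterm
    rw [hcard, nsmul_eq_mul] at h
    push_cast at h
    linarith
  have hFsum : ∑ j ∈ Finset.Icc n₀ n, p j ≤ fpois (k + 1) lam := by
    refine sum_le_fpois hlam0.le (k+1) _ (fun j hj => ?_)
    exact le_trans hk1n₀ (Finset.mem_Icc.mp hj).1
  -- Stirling lower bound on p n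
  have hfact : (Nat.factorial n : ℝ) ≤ Real.exp 1 * Real.sqrt n * ((n : ℝ) / Real.exp 1) ^ n :=
    factorial_le_stirling hn1
  have hlam10 : 10 * Real.sqrt lam ≤ lam := by
    have := mul_le_mul_of_nonneg_right hsq10 hsq
    linarith [hsqsq]
  have hdev : ((n:ℝ) - lam)^2 ≤ 2 * lam := by
    have hd0 : (0:ℝ) ≤ (n:ℝ) - lam := by linarith
    have hd1 : (n:ℝ) - lam ≤ Real.sqrt lam + 2 := by linarith
    calc ((n:ℝ) - lam)^2 ≤ (Real.sqrt lam + 2)^2 := by exact pow_le_pow_left₀ hd0 hd1 2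
      _ = lam + 4 * Real.sqrt lam + 4 := by rw [add_sq]; rw [Real.sq_sqrt hlam0.le]; ring
      _ ≤ 2 * lam := by linarith
  have hA : (n:ℝ)^n * Real.exp (-(n:ℝ)) * Real.exp (-2) ≤ lam^n * Real.exp (-lam) := by
    have ha : (0:ℝ) < (n:ℝ)^n * Real.exp (-(n:ℝ)) * Real.exp (-2) := by positivity
    have hb : (0:ℝ) < lam^n * Real.exp (-lam) := by positivity
    rw [← Real.log_le_log_iff ha hb, Real.log_mul (by positivity) (Real.exp_ne_zero _),
      Real.log_mul (by positivity) (Real.exp_ne_zero _), Real.log_mul (by positivity) (Real.exp_ne_zero _),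
      Real.log_exp, Real.log_exp, Real.log_exp, Real.log_pow, Real.log_pow]
    have hlog : Real.log (n:ℝ) - Real.log lam ≤ (n:ℝ)/lam - 1 := by
      rw [← Real.log_div (ne_of_gt hnpos) (ne_of_gt hlam0)]
      exact Real.log_le_sub_one_of_pos (by positivity)
    have hkey : (n:ℝ) * ((n:ℝ)/lam - 1) ≤ (n:ℝ) - lam + 2 := by
      rw [div_sub_one (ne_of_gt hlam0), ← mul_div_assoc, div_le_iff₀ hlam0]
      nlinarith
    have h1 : (n:ℝ) * Real.log n - (n:ℝ) * Real.log lam ≤ (n:ℝ) - lam + 2 := by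
      calc (n:ℝ) * Real.log n - (n:ℝ) * Real.log lam = (n:ℝ) * (Real.log n - Real.log lam) := by ring
        _ ≤ (n:ℝ) * ((n:ℝ)/lam - 1) := mul_le_mul_of_nonneg_left hlog (le_of_lt hnpos)
        _ ≤ (n:ℝ) - lam + 2 := hkey
    linarith
  have hpn : Real.exp (-3) / Real.sqrt n ≤ p n := by
    have hden : (0:ℝ) < (Nat.factorial n : ℝ) := by positivity
    show Real.exp (-3) / Real.sqrt n ≤ Real.exp (-lam) * lam ^ n / (Nat.factorial n)
    rw [le_div_iff₀ hden]
    have hstep : Real.exp (-3) / Real.sqrt (n:ℝ) * (Nat.factorial n : ℝ) ≤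
        Real.exp (-3) / Real.sqrt (n:ℝ) * (Real.exp 1 * Real.sqrt n * ((n : ℝ) / Real.exp 1) ^ n) := by
      have h0 : (0:ℝ) ≤ Real.exp (-3) / Real.sqrt (n:ℝ) := by positivity
      exact mul_le_mul_of_nonneg_left hfact h0
    have hsqn : (0:ℝ) < Real.sqrt n := Real.sqrt_pos.mpr hnpos
    have hpow : ((n : ℝ) / Real.exp 1) ^ n = (n:ℝ)^n * Real.exp (-(n:ℝ)) := by
      rw [div_pow, Real.exp_neg, ← Real.exp_one_pow, div_eq_mul_inv]
    have heq2 : Real.exp (-3) * Real.exp 1 = Real.exp (-2) := by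
      rw [← Real.exp_add]; norm_num
    calc Real.exp (-3) / Real.sqrt (n:ℝ) * (Nat.factorial n : ℝ)
        ≤ Real.exp (-3) / Real.sqrt (n:ℝ) * (Real.exp 1 * Real.sqrt n * ((n : ℝ) / Real.exp 1) ^ n) := hstep
      _ = (n:ℝ)^n * Real.exp (-(n:ℝ)) * (Real.exp (-3) * Real.exp 1) := by
          rw [hpow]; field_simp
      _ = (n:ℝ)^n * Real.exp (-(n:ℝ)) * Real.exp (-2) := by rw [heq2]
      _ ≤ lam ^ n * Real.exp (-lam) := hA
      _ = Real.exp (-lam) * lam ^ n := by ring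
  -- combine
  have hsqle : Real.sqrt (n:ℝ) ≤ 2 * Real.sqrt lam := by
    have h4 : (n:ℝ) ≤ 4 * lam := by linarith
    have := Real.sqrt_le_sqrt h4
    rwa [show (4:ℝ) * lam = (2*Real.sqrt lam)*(2*Real.sqrt lam) by nlinarith, Real.sqrt_mul_self (by positivity)] at this
  have hfinal : Real.exp (-3) / 2 ≤ ((m:ℝ) + 1) * p n := by
    have hsqn : (0:ℝ) < Real.sqrt n := Real.sqrt_pos.mpr hnpos
    have h1 : Real.exp (-3) / Real.sqrt (n:ℝ) * Real.sqrt lam ≤ ((m:ℝ)+1) * p n := by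
      have hp0 : 0 ≤ p n := le_trans (by positivity) hpn
      calc Real.exp (-3) / Real.sqrt (n:ℝ) * Real.sqrt lam ≤ p n * ((m:ℝ)+1) := by
            have := mul_le_mul hpn (by linarith : Real.sqrt lam ≤ (m:ℝ)+1) hsq hp0
            linarith
        _ = ((m:ℝ)+1) * p n := by ring
    refine le_trans ?_ h1
    rw [div_mul_eq_mul_div, div_le_div_iff₀ (by norm_num) hsqn, mul_comm]
    have he3 : (0:ℝ) < Real.exp (-3) := Real.exp_pos _
    nlinarith
  linarith [hsum, hFsum, hfinal]

lemma key_term_eq {k : ℕ} (lam t F : ℝ) (hF : F ≠ 0) (j : ℕ) (hj : k + 1 ≤ j) :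
    (if k + 1 ≤ j then Real.exp (-lam) * lam ^ j / ((Nat.factorial j : ℝ) * F) else 0) *
      Real.exp (t * j)
      = (Real.exp (lam * (Real.exp t - 1)) / F) *
        (Real.exp (-(lam * Real.exp t)) * (lam * Real.exp t) ^ j / (Nat.factorial j)) := by
  rw [if_pos hj, mul_pow, ← Real.exp_nat_mul]
  have hfac : ((Nat.factorial j : ℝ)) ≠ 0 := by positivity
  field_simp
  rw [mul_assoc, ← Real.exp_add, show lam * (Real.exp t - 1) + -(lam * Real.exp t) = -lam by ring]
  ring

lemma qexp_nonneg {k : ℕ} (lam t F : ℝ) (hF : 0 < F) (hlam : 0 < lam) (j : ℕ) :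
    0 ≤ (if k + 1 ≤ j then Real.exp (-lam) * lam ^ j / ((Nat.factorial j : ℝ) * F) else 0) *
      Real.exp (t * j) := by
  have : (0:ℝ) ≤ (if k + 1 ≤ j then Real.exp (-lam) * lam ^ j / ((Nat.factorial j : ℝ) * F) else 0) := by
    split
    · positivity
    · exact le_refl 0
  positivity

lemma qexp_le {k : ℕ} (lam t F : ℝ) (hF : 0 < F) (hlam : 0 < lam) (j : ℕ) :
    (if k + 1 ≤ j then Real.exp (-lam) * lam ^ j / ((Nat.factorial j : ℝ) * F) else 0) *
      Real.exp (t * j)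
      ≤ (Real.exp (lam * (Real.exp t - 1)) / F) *
        (Real.exp (-(lam * Real.exp t)) * (lam * Real.exp t) ^ j / (Nat.factorial j)) := by
  by_cases hj : k + 1 ≤ j
  · exact le_of_eq (key_term_eq lam t F (ne_of_gt hF) j hj)
  · rw [if_neg hj, zero_mul]
    have hy : 0 < lam * Real.exp t := by positivity
    positivity

lemma summable_qexp {k : ℕ} (lam t F : ℝ) (hF : 0 < F) (hlam : 0 < lam) :
    Summable (fun j : ℕ =>
      (if k + 1 ≤ j then Real.exp (-lam) * lam ^ j / ((Nat.factorial j : ℝ) * F) else 0) *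
        Real.exp (t * j)) := by
  refine Summable.of_nonneg_of_le (qexp_nonneg lam t F hF hlam) (qexp_le lam t F hF hlam) ?_
  exact ((hasSum_pois (lam * Real.exp t)).summable).mul_left _

lemma tsum_qexp_le {k : ℕ} (lam t F : ℝ) (hF : 0 < F) (hlam : 0 < lam) :
    (∑' j : ℕ,
      (if k + 1 ≤ j then Real.exp (-lam) * lam ^ j / ((Nat.factorial j : ℝ) * F) else 0) *
        Real.exp (t * j)) ≤ Real.exp (lam * (Real.exp t - 1)) / F := by
  have h := Summable.tsum_le_tsum (qexp_le (k := k) lam t F hF hlam) (summable_qexp lam t F hF hlam)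
    (((hasSum_pois (lam * Real.exp t)).summable).mul_left _)
  refine h.trans (le_of_eq ?_)
  rw [((hasSum_pois (lam * Real.exp t)).mul_left (Real.exp (lam * (Real.exp t - 1)) / F)).tsum_eq]
  rw [mul_one]

lemma mgf_trunc {Ω : Type} [MeasureSpace Ω] [IsProbabilityMeasure (ℙ : Measure Ω)]
    (Y : Ω → ℕ) (hY : Measurable Y) (q : ℕ → ℝ) (hq0 : ∀ j, 0 ≤ q j)
    (hpmf : ∀ j, (ℙ {ω | Y ω = j}).toReal = q j) (t : ℝ)
    (hsum : Summable (fun j : ℕ => q j * Real.exp (t * j))) :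
    Integrable (fun ω => Real.exp (t * (Y ω : ℝ))) ℙ ∧
      mgf (fun ω => (Y ω : ℝ)) ℙ t = ∑' j : ℕ, q j * Real.exp (t * j) := by
  set g : ℕ → ℝ := fun j => Real.exp (t * j) with hgdef
  have hg : StronglyMeasurable g := (measurable_from_top : Measurable g).stronglyMeasurable
  set ν := Measure.map Y ℙ with hνdef
  have hνj : ∀ j, ν {j} = ENNReal.ofReal (q j) := by
    intro j
    rw [hνdef, Measure.map_apply hY (measurableSet_singleton j)]
    have hpre : Y ⁻¹' {j} = {ω | Y ω = j} := rfl
    rw [hpre, ← hpmf j, ENNReal.ofReal_toReal (measure_ne_top _ _)]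
  have hInt : Integrable g ν := by
    refine ⟨hg.aestronglyMeasurable, ?_⟩
    rw [hasFiniteIntegral_def, lintegral_countable']
    have : ∀ j : ℕ, ‖g j‖ₑ * ν {j} = ENNReal.ofReal (q j * Real.exp (t * j)) := by
      intro j
      rw [hνj j, Real.enorm_eq_ofReal (Real.exp_pos _).le, ← ENNReal.ofReal_mul (Real.exp_pos _).le]
      rw [mul_comm (Real.exp (t * j)) (q j)]
    rw [tsum_congr this, ← ENNReal.ofReal_tsum_of_nonneg
      (fun j => mul_nonneg (hq0 j) (Real.exp_pos _).le) hsum]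
    exact ENNReal.ofReal_lt_top
  have hIntΩ : Integrable (fun ω => Real.exp (t * (Y ω : ℝ))) ℙ :=
    (integrable_map_measure hg.aestronglyMeasurable hY.aemeasurable).mp hInt
  refine ⟨hIntΩ, ?_⟩
  have h1 : mgf (fun ω => (Y ω : ℝ)) ℙ t = ∫ x, g x ∂ν := by
    rw [mgf, hνdef, integral_map hY.aemeasurable hg.aestronglyMeasurable]
  rw [h1, integral_countable' hInt]
  refine tsum_congr (fun j => ?_)
  rw [measureReal_def, hνj j, ENNReal.toReal_ofReal (hq0 j), smul_eq_mul]

/-- Fix `0 < δ < 1`. There exist `N > 0` and `0 < α < 1` (depending only on `δ`),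
together with a closeness parameter `η > 0` and a size threshold `S₀`, such that for all
`k > N`: if `μ ≥ k + 2`, `λ` satisfies `λ f_k(λ) = μ f_{k+1}(λ)` with `(1−δ)μ < λ ≤ μ`
and `μ − λ < η`, and `Y_1, …, Y_s` (with `s ≥ S₀`) are i.i.d. Poisson(λ) variables
truncated to be `≥ k+1` (so each has mean `μ`), then
`P(|∑ Y_i − μ s| ≥ δ μ s) ≤ α^{μ s}`. -/
theorem stmt6 (δ : ℝ) (hδ0 : 0 < δ) (hδ1 : δ < 1) :
    ∃ N : ℕ, 0 < N ∧ ∃ α : ℝ, 0 < α ∧ α < 1 ∧ ∃ η : ℝ, 0 < η ∧ ∃ S₀ : ℕ,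
      ∀ k : ℕ, N < k → ∀ μ lam : ℝ, (k : ℝ) + 2 ≤ μ →
        lam * fpois k lam = μ * fpois (k + 1) lam →
        (1 - δ) * μ < lam → lam ≤ μ → μ - lam < η →
        ∀ s : ℕ, S₀ ≤ s →
          ∀ (Ω : Type) (_ : MeasureSpace Ω) (_ : IsProbabilityMeasure (ℙ : Measure Ω))
            (Y : Fin s → Ω → ℕ),
            (∀ i, Measurable (Y i)) →
            iIndepFun Y ℙ →
            (∀ i j, (ℙ {ω | Y i ω = j}).toReal =
              if k + 1 ≤ j then
                Real.exp (-lam) * lam ^ j / (Nat.factorial j * fpois (k + 1) lam)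
              else 0) →
            (ℙ {ω | δ * μ * s ≤ |(∑ i, (Y i ω : ℝ)) - μ * s|}).toReal ≤ α ^ (μ * s) := by
  set c₁ : ℝ := (1 + δ) * Real.log (1 + δ) - δ with hc₁def
  set c₂ : ℝ := δ + (1 - δ) * Real.log (1 - δ) with hc₂def
  set c : ℝ := min c₁ c₂ with hcdef
  have hc₁ : 0 < c₁ := by
    have h := Real.log_lt_sub_one_of_pos (x := (1 + δ)⁻¹) (by positivity)
      (by intro h; rw [inv_eq_one] at h; linarith)
    rw [Real.log_inv] at h
    have h2 : (1 + δ)⁻¹ - 1 = -δ / (1 + δ) := by field_simp; ring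
    rw [h2] at h
    have h3 : δ / (1 + δ) < Real.log (1 + δ) := by
      rw [neg_div] at h
      linarith
    have h5 := mul_lt_mul_of_pos_left h3 (show (0:ℝ) < 1 + δ by linarith)
    have h6 : (1 + δ) * (δ / (1 + δ)) = δ := by field_simp
    rw [hc₁def]
    linarith
  have hc₂ : 0 < c₂ := by
    have h := Real.log_lt_sub_one_of_pos (x := (1 - δ)⁻¹) (by
      have : 0 < 1 - δ := by linarith
      positivity)
      (by intro h; rw [inv_eq_one] at h; linarith)
    rw [Real.log_inv] at h
    have h1δ : 0 < 1 - δ := by linarith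
    have h2 : (1 - δ)⁻¹ - 1 = δ / (1 - δ) := by field_simp; ring
    rw [h2] at h
    have h3 : -(δ / (1 - δ)) < Real.log (1 - δ) := by linarith
    have h5 := mul_lt_mul_of_pos_left h3 h1δ
    have h6 : (1 - δ) * -(δ / (1 - δ)) = -δ := by field_simp
    rw [hc₂def]
    linarith
  have hc : 0 < c := lt_min hc₁ hc₂
  refine ⟨100 + ⌈10 / c⌉₊, by positivity, Real.exp (-(c / 4)), Real.exp_pos _, ?_, 1,
    one_pos, 1, ?_⟩
  · rw [Real.exp_lt_one_iff]
    linarith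
  intro k hk μ lam hμ _heq hlb hub hclose s hs Ω _ hprob Y hYmeas hindep hpmf
  -- basic bounds
  have hk100 : 100 ≤ k := by omega
  have hNle : (10 : ℝ) / c ≤ ((100 + ⌈10 / c⌉₊ : ℕ) : ℝ) := by
    push_cast
    have := Nat.le_ceil (10 / c)
    linarith
  have hkR : ((100 + ⌈10 / c⌉₊ : ℕ) : ℝ) + 1 ≤ (k : ℝ) := by exact_mod_cast hk
  have hμc : 10 / c ≤ μ := by linarith
  have hμ0 : 0 < μ := by
    have : (0:ℝ) ≤ k := Nat.cast_nonneg k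
    linarith
  have hcμ : 10 ≤ c * μ := by
    rw [div_le_iff₀ hc] at hμc
    linarith [hμc]
  have hlamk : (k : ℝ) + 1 ≤ lam := by linarith
  have hlam0 : 0 < lam := by
    have : (0:ℝ) ≤ k := Nat.cast_nonneg k
    linarith
  have hs1 : (1:ℝ) ≤ (s : ℝ) := by exact_mod_cast hs
  -- the tail constant F
  set F : ℝ := fpois (k + 1) lam with hFdef
  have hF0 : 0 < F := fpois_pos hlam0 (k + 1)
  have h2e : (2:ℝ) ≤ Real.exp 1 := by
    have := Real.add_one_le_exp (1:ℝ); linarith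
  have hF4 : Real.exp (-(4:ℝ)) ≤ F := by
    have h1 : Real.exp (-(4:ℝ)) = Real.exp (-3) / Real.exp 1 := by
      rw [eq_div_iff (Real.exp_ne_zero _), ← Real.exp_add]; norm_num
    have h2 : Real.exp (-3) / Real.exp 1 ≤ Real.exp (-3) / 2 :=
      div_le_div_of_nonneg_left (Real.exp_pos _).le (by norm_num) h2e
    have h3 := fpois_lower hk100 hlamk
    rw [hFdef]
    linarith
  have hFinv : F⁻¹ ≤ Real.exp 4 := by
    rw [show Real.exp (4:ℝ) = (Real.exp (-(4:ℝ)))⁻¹ from by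
      rw [← Real.exp_neg]; norm_num]
    exact inv_anti₀ (Real.exp_pos _) hF4
  -- pmf
  set q : ℕ → ℝ := fun j =>
    if k + 1 ≤ j then Real.exp (-lam) * lam ^ j / ((Nat.factorial j : ℝ) * F) else 0 with hqdef
  have hq0 : ∀ j, 0 ≤ q j := by
    intro j
    rw [hqdef]
    dsimp only
    split
    · positivity
    · exact le_refl 0
  have hpmf' : ∀ (i : Fin s) (j : ℕ), (ℙ {ω | Y i ω = j}).toReal = q j := by
    intro i j
    rw [hqdef]
    exact hpmf i j
  -- real-valued variables
  set X : Fin s → Ω → ℝ := fun i ω => (Y i ω : ℝ) with hXdef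
  have hXmeas : ∀ i, Measurable (X i) := fun i =>
    (measurable_from_top : Measurable (Nat.cast : ℕ → ℝ)).comp (hYmeas i)
  have hXindep : iIndepFun X ℙ :=
    hindep.comp (fun _ (n : ℕ) => (n : ℝ)) (fun _ => measurable_from_top)
  have hsummable : ∀ t : ℝ, Summable (fun j : ℕ => q j * Real.exp (t * j)) := by
    intro t
    simp only [hqdef]
    exact summable_qexp lam t F hF0 hlam0
  have hInt : ∀ (t : ℝ) (i : Fin s), Integrable (fun ω => Real.exp (t * X i ω)) ℙ :=
    fun t i => (mgf_trunc (Y i) (hYmeas i) q hq0 (hpmf' i) t (hsummable t)).1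
  have hmgfle : ∀ (t : ℝ) (i : Fin s),
      mgf (X i) ℙ t ≤ Real.exp (lam * (Real.exp t - 1)) / F := by
    intro t i
    have h2 := (mgf_trunc (Y i) (hYmeas i) q hq0 (hpmf' i) t (hsummable t)).2
    have h3 : mgf (X i) ℙ t = ∑' j : ℕ, q j * Real.exp (t * j) := h2
    rw [h3]
    have := tsum_qexp_le (k := k) lam t F hF0 hlam0
    simp only [hqdef]
    exact this
  have hIntSum : ∀ t : ℝ, Integrable (fun ω => Real.exp (t * (∑ i, X i) ω)) ℙ :=
    fun t => hXindep.integrable_exp_mul_sum hXmeas (fun i _ => hInt t i)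
  have hmgfsum_le : ∀ t : ℝ,
      mgf (∑ i, X i) ℙ t ≤ (Real.exp (lam * (Real.exp t - 1)) / F) ^ s := by
    intro t
    rw [hXindep.mgf_sum hXmeas Finset.univ]
    calc ∏ i, mgf (X i) ℙ t
        ≤ ∏ _i : Fin s, (Real.exp (lam * (Real.exp t - 1)) / F) :=
          Finset.prod_le_prod (fun i _ => mgf_nonneg) (fun i _ => hmgfle t i)
      _ = _ := by rw [Finset.prod_const, Finset.card_univ, Fintype.card_fin]
  -- Chernoff, upper tail
  set t₁ : ℝ := Real.log (1 + δ) with ht₁def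
  have ht₁0 : 0 ≤ t₁ := Real.log_nonneg (by linarith)
  have het₁ : Real.exp t₁ = 1 + δ := Real.exp_log (by linarith)
  set t₂ : ℝ := Real.log (1 - δ) with ht₂def
  have ht₂0 : t₂ ≤ 0 := Real.log_nonpos (by linarith) (by linarith)
  have het₂ : Real.exp t₂ = 1 - δ := Real.exp_log (by linarith)
  have hup := measure_ge_le_exp_mul_mgf (μ := ℙ) (X := ∑ i, X i)
    ((1 + δ) * (μ * (s : ℝ))) ht₁0 (hIntSum t₁)
  have hlow := measure_le_le_exp_mul_mgf (μ := ℙ) (X := ∑ i, X i)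
    ((1 - δ) * (μ * (s : ℝ))) ht₂0 (hIntSum t₂)
  -- per-factor bounds
  have hccμ₁ : c * μ ≤ c₁ * μ := mul_le_mul_of_nonneg_right (min_le_left _ _) hμ0.le
  have hccμ₂ : c * μ ≤ c₂ * μ := mul_le_mul_of_nonneg_right (min_le_right _ _) hμ0.le
  have hc₁mul : c₁ * μ = (1 + δ) * t₁ * μ - δ * μ := by rw [hc₁def]; ring
  have hc₂mul : c₂ * μ = δ * μ + (1 - δ) * t₂ * μ := by rw [hc₂def]; ring
  have hlamδ : lam * δ ≤ μ * δ := mul_le_mul_of_nonneg_right hub hδ0.le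
  have hperfac₁ : Real.exp (-t₁ * ((1 + δ) * μ)) * (Real.exp (lam * (Real.exp t₁ - 1)) / F)
      ≤ Real.exp (-(c / 2) * μ) := by
    have hr : lam * (Real.exp t₁ - 1) = lam * δ := by rw [het₁]; ring
    calc Real.exp (-t₁ * ((1 + δ) * μ)) * (Real.exp (lam * (Real.exp t₁ - 1)) / F)
        = Real.exp (-t₁ * ((1 + δ) * μ)) * (Real.exp (lam * δ) * F⁻¹) := by
          rw [hr, div_eq_mul_inv]
      _ ≤ Real.exp (-t₁ * ((1 + δ) * μ)) * (Real.exp (lam * δ) * Real.exp 4) := by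
          have h0 : (0:ℝ) ≤ Real.exp (-t₁ * ((1 + δ) * μ)) * Real.exp (lam * δ) := by positivity
          calc Real.exp (-t₁ * ((1 + δ) * μ)) * (Real.exp (lam * δ) * F⁻¹)
              = Real.exp (-t₁ * ((1 + δ) * μ)) * Real.exp (lam * δ) * F⁻¹ := by ring
            _ ≤ Real.exp (-t₁ * ((1 + δ) * μ)) * Real.exp (lam * δ) * Real.exp 4 :=
                mul_le_mul_of_nonneg_left hFinv h0
            _ = Real.exp (-t₁ * ((1 + δ) * μ)) * (Real.exp (lam * δ) * Real.exp 4) := by ring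
      _ = Real.exp (-t₁ * ((1 + δ) * μ) + lam * δ + 4) := by
          rw [← Real.exp_add, ← Real.exp_add]; ring_nf
      _ ≤ Real.exp (-(c / 2) * μ) := by
          rw [Real.exp_le_exp]
          linarith [hc₁mul, hccμ₁, hcμ, hlamδ]
  have hperfac₂ : Real.exp (-t₂ * ((1 - δ) * μ)) * (Real.exp (lam * (Real.exp t₂ - 1)) / F)
      ≤ Real.exp (-(c / 2) * μ) := by
    have hr : lam * (Real.exp t₂ - 1) = -(lam * δ) := by rw [het₂]; ring
    have hlamδ' : -(lam * δ) ≤ -(μ * δ) + δ := by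
      have h1 : μ - 1 < lam := by linarith
      nlinarith
    calc Real.exp (-t₂ * ((1 - δ) * μ)) * (Real.exp (lam * (Real.exp t₂ - 1)) / F)
        = Real.exp (-t₂ * ((1 - δ) * μ)) * (Real.exp (-(lam * δ)) * F⁻¹) := by
          rw [hr, div_eq_mul_inv]
      _ ≤ Real.exp (-t₂ * ((1 - δ) * μ)) * (Real.exp (-(lam * δ)) * Real.exp 4) := by
          have h0 : (0:ℝ) ≤ Real.exp (-t₂ * ((1 - δ) * μ)) * Real.exp (-(lam * δ)) := by positivity
          calc Real.exp (-t₂ * ((1 - δ) * μ)) * (Real.exp (-(lam * δ)) * F⁻¹)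
              = Real.exp (-t₂ * ((1 - δ) * μ)) * Real.exp (-(lam * δ)) * F⁻¹ := by ring
            _ ≤ Real.exp (-t₂ * ((1 - δ) * μ)) * Real.exp (-(lam * δ)) * Real.exp 4 :=
                mul_le_mul_of_nonneg_left hFinv h0
            _ = Real.exp (-t₂ * ((1 - δ) * μ)) * (Real.exp (-(lam * δ)) * Real.exp 4) := by ring
      _ = Real.exp (-t₂ * ((1 - δ) * μ) + -(lam * δ) + 4) := by
          rw [← Real.exp_add, ← Real.exp_add]; ring_nf
      _ ≤ Real.exp (-(c / 2) * μ) := by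
          rw [Real.exp_le_exp]
          linarith [hc₂mul, hccμ₂, hcμ, hlamδ', hδ1]
  -- tail bounds
  have htail : ∀ (t ε : ℝ),
      Real.exp (-t * (ε * (μ * (s : ℝ)))) * mgf (∑ i, X i) ℙ t ≤
        (Real.exp (-t * (ε * μ)) * (Real.exp (lam * (Real.exp t - 1)) / F)) ^ s := by
    intro t ε
    calc Real.exp (-t * (ε * (μ * (s : ℝ)))) * mgf (∑ i, X i) ℙ t
        ≤ Real.exp (-t * (ε * (μ * (s : ℝ)))) * (Real.exp (lam * (Real.exp t - 1)) / F) ^ s :=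
          mul_le_mul_of_nonneg_left (hmgfsum_le t) (Real.exp_pos _).le
      _ = (Real.exp (-t * (ε * μ))) ^ s * (Real.exp (lam * (Real.exp t - 1)) / F) ^ s := by
          rw [show -t * (ε * (μ * (s:ℝ))) = (s:ℝ) * (-t * (ε * μ)) from by ring,
            Real.exp_nat_mul]
      _ = (Real.exp (-t * (ε * μ)) * (Real.exp (lam * (Real.exp t - 1)) / F)) ^ s := by
          rw [mul_pow]
  have hupfin : (ℙ {ω | (1 + δ) * (μ * (s : ℝ)) ≤ (∑ i, X i) ω}).toReal ≤
      Real.exp (-(c / 2) * μ) ^ s := by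
    refine hup.trans ((htail t₁ (1 + δ)).trans ?_)
    exact pow_le_pow_left₀ (by positivity) hperfac₁ s
  have hlowfin : (ℙ {ω | (∑ i, X i) ω ≤ (1 - δ) * (μ * (s : ℝ))}).toReal ≤
      Real.exp (-(c / 2) * μ) ^ s := by
    refine hlow.trans ((htail t₂ (1 - δ)).trans ?_)
    exact pow_le_pow_left₀ (by positivity) hperfac₂ s
  -- event inclusion
  set A : Set Ω := {ω | (1 + δ) * (μ * (s : ℝ)) ≤ (∑ i, X i) ω} with hAdef
  set B : Set Ω := {ω | (∑ i, X i) ω ≤ (1 - δ) * (μ * (s : ℝ))} with hBdef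
  have hincl : {ω | δ * μ * (s:ℝ) ≤ |(∑ i, (Y i ω : ℝ)) - μ * (s:ℝ)|} ⊆ A ∪ B := by
    intro ω hω
    simp only [Set.mem_setOf_eq] at hω
    have hSf : (∑ i, X i) ω = ∑ i, (Y i ω : ℝ) := by
      rw [Finset.sum_apply]
    rcases abs_cases ((∑ i, (Y i ω : ℝ)) - μ * (s:ℝ)) with ⟨h1, _⟩ | ⟨h1, _⟩
    · left
      show (1 + δ) * (μ * (s : ℝ)) ≤ (∑ i, X i) ω
      rw [hSf]
      rw [h1] at hω
      nlinarith
    · right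
      show (∑ i, X i) ω ≤ (1 - δ) * (μ * (s : ℝ))
      rw [hSf]
      rw [h1] at hω
      nlinarith
  have hmeas_le : (ℙ {ω | δ * μ * (s:ℝ) ≤ |(∑ i, (Y i ω : ℝ)) - μ * (s:ℝ)|}).toReal ≤
      (ℙ A).toReal + (ℙ B).toReal := by
    have h1 : ℙ {ω | δ * μ * (s:ℝ) ≤ |(∑ i, (Y i ω : ℝ)) - μ * (s:ℝ)|} ≤ ℙ A + ℙ B :=
      (measure_mono hincl).trans (measure_union_le A B)
    have h2 := ENNReal.toReal_mono
      (by exact ENNReal.add_ne_top.mpr ⟨measure_ne_top _ _, measure_ne_top _ _⟩) h1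
    rwa [ENNReal.toReal_add (measure_ne_top _ _) (measure_ne_top _ _)] at h2
  -- final numeric bound
  have hpow : Real.exp (-(c / 2) * μ) ^ s = Real.exp (-(c / 2) * μ * (s:ℝ)) := by
    rw [← Real.exp_nat_mul]
    congr 1
    ring
  have hexps : (2:ℝ) ≤ Real.exp ((c / 4) * (μ * (s:ℝ))) := by
    have hcs : 10 * 1 ≤ (c * μ) * (s:ℝ) :=
      mul_le_mul hcμ hs1 zero_le_one (by positivity)
    have h1 : (1:ℝ) ≤ (c / 4) * (μ * (s:ℝ)) := by nlinarith [hcs]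
    have h2 := Real.add_one_le_exp ((c / 4) * (μ * (s:ℝ)))
    linarith
  have hfinal : (ℙ A).toReal + (ℙ B).toReal ≤ Real.exp (-(c / 4)) ^ (μ * (s:ℝ)) := by
    have hα : Real.exp (-(c / 4)) ^ (μ * (s:ℝ)) = Real.exp (-(c / 4) * (μ * (s:ℝ))) := by
      rw [Real.rpow_def_of_pos (Real.exp_pos _), Real.log_exp]
    rw [hα]
    have h3 : 2 * Real.exp (-(c / 2) * μ * (s:ℝ)) ≤ Real.exp (-(c / 4) * (μ * (s:ℝ))) := by
      have h4 := mul_le_mul_of_nonneg_right hexps (Real.exp_pos (-(c / 2) * μ * (s:ℝ))).le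
      calc 2 * Real.exp (-(c / 2) * μ * (s:ℝ))
          ≤ Real.exp ((c / 4) * (μ * (s:ℝ))) * Real.exp (-(c / 2) * μ * (s:ℝ)) := h4
        _ = Real.exp (-(c / 4) * (μ * (s:ℝ))) := by
            rw [← Real.exp_add]
            congr 1
            ring
    rw [← hpow] at h3
    linarith [hupfin, hlowfin]
  exact hmeas_le.trans hfinal
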